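/- Let f∂ be a nonzero element of Witt(R), where R is the field of formal Laurent series over k. Then for every a ∈ k, the a-eigenspace of ad(f∂) is at most one-dimensional; moreover, if g∂ is a nonzero element of E_a(f∂), then g = fu where LD(u) = a/f. -/

import Mathlib

open HahnSeries

namespace Stmt13Aux
variable {k : Type} [Field k]

local notation "D" => LaurentSeries.derivative k

lemma Dcoeff (f : LaurentSeries k) (n : ℤ) :
    (D f).coeff n = ((n : k) + 1) * f.coeff (n + 1) := by
  simp [LaurentSeries.derivative_apply, LaurentSeries.hasseDeriv_coeff, Ring.choose_one_right]

lemma coeff_of_neg (p : PowerSeries k) {n : ℤ} (hn : n < 0) :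
    (ofPowerSeries ℤ k p).coeff n = 0 := by
  rw [HahnSeries.ofPowerSeries_apply, HahnSeries.embDomain_notin_range]
  simp only [Set.mem_range, RelEmbedding.coe_mk, Function.Embedding.coeFn_mk, not_exists]
  intro m h; have h' : (m : ℤ) = n := h; omega

lemma single_mul_coeff' (b : ℤ) (r : k) (x : LaurentSeries k) (n : ℤ) :
    (single b r * x).coeff n = r * x.coeff (n - b) := by
  conv_lhs => rw [show n = n - b + b by ring]
  rw [coeff_single_mul_add]

lemma D_ofPowerSeries (p : PowerSeries k) :
    D (ofPowerSeries ℤ k p) = ofPowerSeries ℤ k (PowerSeries.derivative k p) := by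
  ext n
  rw [Dcoeff]
  rcases lt_trichotomy n (-1) with h | h | h
  · rw [coeff_of_neg _ (by omega), coeff_of_neg _ (by omega), mul_zero]
  · subst h
    rw [show ((-1 : ℤ) : k) + 1 = 0 by norm_num, zero_mul,
      coeff_of_neg _ (by norm_num : (-1 : ℤ) < 0)]
  · obtain ⟨m, rfl⟩ : ∃ m : ℕ, n = (m : ℤ) := ⟨n.toNat, by omega⟩
    have h1 : ((m : ℤ) + 1) = ((m + 1 : ℕ) : ℤ) := by push_cast; ring
    rw [h1, ofPowerSeries_apply_coeff, ofPowerSeries_apply_coeff,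
      PowerSeries.coeff_derivative]
    push_cast
    ring


lemma D_single_mul (b : ℤ) (r : k) (y : LaurentSeries k) :
    D (single b r * y)
      = single (b - 1) ((b : k) * r) * y + single b r * D y := by
  ext n
  rw [coeff_add, Dcoeff, single_mul_coeff', single_mul_coeff', single_mul_coeff', Dcoeff,
    show n + 1 - b = n - (b - 1) by ring, show n - b + 1 = n - (b - 1) by ring]
  push_cast
  ring

lemma single_add' (b : ℤ) (r s : k) :
    (single b (r + s) : LaurentSeries k) = single b r + single b s := by
  ext n
  by_cases h : n = b <;> simp [h]

lemma D_mul_aux (a b : ℤ) (p q : PowerSeries k) :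
    D ((single a 1 * ofPowerSeries ℤ k p) * (single b 1 * ofPowerSeries ℤ k q))
      = D (single a 1 * ofPowerSeries ℤ k p) * (single b 1 * ofPowerSeries ℤ k q)
        + (single a 1 * ofPowerSeries ℤ k p) * D (single b 1 * ofPowerSeries ℤ k q) := by
  have e1 : (single a (1:k) * ofPowerSeries ℤ k p) * (single b 1 * ofPowerSeries ℤ k q)
      = single (a+b) 1 * ofPowerSeries ℤ k (p * q) := by
    rw [map_mul, show (single a (1:k) * ofPowerSeries ℤ k p) * (single b 1 * ofPowerSeries ℤ k q)
        = (single a 1 * single b 1) * (ofPowerSeries ℤ k p * ofPowerSeries ℤ k q) by ring,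
      single_mul_single, one_mul]
  have e2 : PowerSeries.derivative k (p * q)
      = PowerSeries.derivative k p * q + p * PowerSeries.derivative k q := by
    rw [Derivation.leibniz, smul_eq_mul, smul_eq_mul]; ring
  rw [e1, D_single_mul, mul_one, D_ofPowerSeries, e2]
  simp only [map_add, map_mul]
  simp only [D_single_mul, D_ofPowerSeries, mul_one]
  have f1 : (single (a+b-1) ((a:k)) : LaurentSeries k) = single (a-1) (a:k) * single b 1 := by
    rw [single_mul_single, mul_one, show a-1+b = a+b-1 by ring]
  have f2 : (single (a+b-1) ((b:k)) : LaurentSeries k) = single a 1 * single (b-1) (b:k) := by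
    rw [single_mul_single, one_mul, show a+(b-1) = a+b-1 by ring]
  have f3 : (single (a+b) (1:k) : LaurentSeries k) = single a 1 * single b 1 := by
    rw [single_mul_single, one_mul]
  rw [show ((a+b : ℤ) : k) = (a:k) + (b:k) by push_cast; ring, single_add', f1, f2, f3]
  ring

lemma D_mul (x y : LaurentSeries k) :
    D (x * y) = D x * y + x * D y := by
  by_cases hx : x = 0
  · simp [hx]
  by_cases hy : y = 0
  · simp [hy]
  have hx' := x.single_order_mul_powerSeriesPart
  have hy' := y.single_order_mul_powerSeriesPart
  conv_lhs => rw [← hx', ← hy']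
  rw [D_mul_aux, hx', hy']

lemma eq_const [CharZero k] (w : LaurentSeries k) (hw : D w = 0) :
    w = (w.coeff 0) • 1 := by
  ext n
  by_cases hn : n = 0
  · subst hn; simp
  · have h := congrArg (fun z : LaurentSeries k => z.coeff (n - 1)) hw
    simp only [Dcoeff, coeff_zero, sub_add_cancel] at h
    have hne : ((n - 1 : ℤ) : k) + 1 ≠ 0 := by
      intro hc
      push_cast at hc
      have h0 : ((n : ℤ) : k) = 0 := by linear_combination hc
      exact hn (Int.cast_eq_zero.mp h0)
    have hz : w.coeff n = 0 := by
      rcases mul_eq_zero.mp h with h' | h'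
      · exact absurd h' hne
      · exact h'
    simp [hz, coeff_smul, coeff_one, hn]

lemma smul_eq (a : k) (x : LaurentSeries k) : a • x = single (0:ℤ) a * x := by
  ext n
  rw [single_mul_coeff', sub_zero, HahnSeries.coeff_smul, smul_eq_mul]

end Stmt13Aux

open Stmt13Aux in
/-- For nonzero `f∂ ∈ Witt(R)` and `a ∈ k`, the `a`-eigenspace of `ad(f∂)` is at
most one-dimensional, and any nonzero eigenvector `g∂ ∈ E_a(f∂)` has `g = f·u`
with `LD(u) = a/f` (i.e. `f·u' = a·u`). -/
theorem stmt13 {k : Type} [Field k] [CharZero k]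
    (f : LaurentSeries k) (hf : f ≠ 0) (a : k) :
    (∀ g h : LaurentSeries k, g ≠ 0 →
      f * LaurentSeries.derivative k g - g * LaurentSeries.derivative k f = a • g →
      f * LaurentSeries.derivative k h - h * LaurentSeries.derivative k f = a • h →
      ∃ c : k, h = c • g) ∧
    (∀ g : LaurentSeries k, g ≠ 0 →
      f * LaurentSeries.derivative k g - g * LaurentSeries.derivative k f = a • g →
      ∃ u : LaurentSeries k, u ≠ 0 ∧ g = f * u ∧
        f * LaurentSeries.derivative k u = a • u) := by
  constructor
  · intro g h hg hgeq hheq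
    by_cases hh : h = 0
    · exact ⟨0, by simp [hh]⟩
    set w : LaurentSeries k := g⁻¹ * h with hw
    have hhw : h = g * w := by rw [hw, ← mul_assoc, mul_inv_cancel₀ hg, one_mul]
    have hDh : LaurentSeries.derivative k h
        = LaurentSeries.derivative k g * w + g * LaurentSeries.derivative k w := by
      rw [hhw, D_mul]
    simp only [smul_eq] at hgeq hheq
    have key : f * g * LaurentSeries.derivative k w = 0 := by
      rw [hDh, hhw] at hheq
      linear_combination hheq - w * hgeq
    have hDw : LaurentSeries.derivative k w = 0 := by
      rcases mul_eq_zero.mp key with h' | h'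
      · rcases mul_eq_zero.mp h' with h'' | h''
        · exact absurd h'' hf
        · exact absurd h'' hg
      · exact h'
    refine ⟨w.coeff 0, ?_⟩
    have hconst := eq_const w hDw
    rw [hhw]
    conv_lhs => rw [hconst]
    rw [smul_eq, smul_eq, mul_one]
    ring
  · intro g hg hgeq
    set u : LaurentSeries k := f⁻¹ * g with hu
    have hgu : g = f * u := by rw [hu, ← mul_assoc, mul_inv_cancel₀ hf, one_mul]
    refine ⟨u, ?_, hgu, ?_⟩
    · intro h0
      rw [h0, mul_zero] at hgu
      exact hg hgu
    · have hDg : LaurentSeries.derivative k g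
          = LaurentSeries.derivative k f * u + f * LaurentSeries.derivative k u := by
        rw [hgu, D_mul]
      simp only [smul_eq] at hgeq ⊢
      rw [hDg, hgu] at hgeq
      have key : f * (f * LaurentSeries.derivative k u)
          = f * (single (0:ℤ) a * u) := by
        linear_combination hgeq
      exact mul_left_cancel₀ hf key
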